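/- For every complex n×n matrix A, the spectrum of the Sylvester operator X ↦ AX + XAᵀ, viewed as a linear endomorphism of the space of all complex n×n matrices, equals the set of all sums λ + μ where λ and μ range over the spectrum of A. -/

import Mathlib

open Matrix

/-- The Sylvester operator `X ↦ AX + XAᵀ` as a linear endomorphism of the space
of complex `n × n` matrices. -/
noncomputable def sylvesterEnd {n : ℕ} (A : Matrix (Fin n) (Fin n) ℂ) :
    Module.End ℂ (Matrix (Fin n) (Fin n) ℂ) where
  toFun X := A * X + X * Aᵀ
  map_add' X Y := by
    simp only [mul_add, add_mul]
    abel
  map_smul' c X := by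
    simp only [RingHom.id_apply, mul_smul_comm, smul_mul_assoc, smul_add]

section Aux

open Polynomial

variable {n : ℕ}

lemma eval_charpoly' (A : Matrix (Fin n) (Fin n) ℂ) (r : ℂ) :
    (A.charpoly).eval r = det (algebraMap ℂ _ r - A) := by
  rw [Matrix.charpoly, eval_det, matPolyEquiv_charmatrix]
  simp [Matrix.scalar, Matrix.algebraMap_eq_diagonal]

lemma mem_spectrum_of_isRoot (A : Matrix (Fin n) (Fin n) ℂ) (r : ℂ)
    (h : (A.charpoly).IsRoot r) : r ∈ spectrum ℂ A := by
  rw [spectrum.mem_iff, Matrix.isUnit_iff_isUnit_det]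
  rw [Polynomial.IsRoot, eval_charpoly' A r] at h
  simp [h]

lemma spectrum_transpose (A : Matrix (Fin n) (Fin n) ℂ) :
    spectrum ℂ Aᵀ = spectrum ℂ A := by
  ext z
  simp only [spectrum.mem_iff, Matrix.isUnit_iff_isUnit_det, not_iff_not]
  have : algebraMap ℂ (Matrix (Fin n) (Fin n) ℂ) z - Aᵀ
      = (algebraMap ℂ (Matrix (Fin n) (Fin n) ℂ) z - A)ᵀ := by
    rw [transpose_sub]
    congr 1
    simp [Matrix.algebraMap_eq_diagonal]
  rw [this, det_transpose]

lemma key_lemma (A B X : Matrix (Fin n) (Fin n) ℂ) (hX : X ≠ 0)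
    (h : A * X = X * B) : ∃ l, l ∈ spectrum ℂ A ∧ l ∈ spectrum ℂ B := by
  by_contra hc
  push_neg at hc
  have hpow : ∀ k : ℕ, A ^ k * X = X * B ^ k := by
    intro k
    induction k with
    | zero => simp
    | succ k ih =>
      rw [pow_succ, pow_succ, mul_assoc (A ^ k), h, ← mul_assoc, ih, mul_assoc]
  have hq : ∀ q : ℂ[X], (Polynomial.aeval A q) * X = X * (Polynomial.aeval B q) := by
    intro q
    induction q using Polynomial.induction_on' with
    | add p q hp hq => rw [map_add, map_add, add_mul, mul_add, hp, hq]
    | monomial k a =>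
      rw [Polynomial.aeval_monomial, Polynomial.aeval_monomial,
        ← Algebra.smul_def, ← Algebra.smul_def, smul_mul_assoc, mul_smul_comm, hpow]
  have hC := hq A.charpoly
  rw [Matrix.aeval_self_charpoly, zero_mul] at hC
  have hsplit : A.charpoly = (A.charpoly.roots.map fun a => Polynomial.X - Polynomial.C a).prod :=
    (IsAlgClosed.splits A.charpoly).eq_prod_roots_of_monic (Matrix.charpoly_monic A)
  set l : List ℂ := A.charpoly.roots.toList with hl
  have hmem : ∀ a ∈ l, a ∈ A.charpoly.roots := fun a ha => by
    rwa [hl, Multiset.mem_toList] at ha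
  have hsplit' : A.charpoly = (l.map fun a => Polynomial.X - Polynomial.C a).prod := by
    rw [hsplit]
    rw [← Multiset.prod_coe, ← Multiset.map_coe, hl, Multiset.coe_toList]
  have hfact : Polynomial.aeval B A.charpoly
      = (l.map fun a => B - algebraMap ℂ (Matrix (Fin n) (Fin n) ℂ) a).prod := by
    conv_lhs => rw [hsplit']
    rw [map_list_prod, List.map_map]
    congr 1
    apply List.map_congr_left
    intro a _
    simp
  have hunit : IsUnit (Polynomial.aeval B A.charpoly) := by
    rw [hfact]
    apply List.prod_isUnit
    intro M hM
    simp only [List.mem_map] at hM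
    obtain ⟨a, ha, rfl⟩ := hM
    have haA : a ∈ spectrum ℂ A :=
      mem_spectrum_of_isRoot A a
        ((Polynomial.mem_roots (Matrix.charpoly_monic A).ne_zero).mp (hmem a ha))
    have hnb := hc a haA
    rw [spectrum.notMem_iff] at hnb
    simpa using hnb.neg
  obtain ⟨u, hu⟩ := hunit
  apply hX
  have h0 : X * (↑u : Matrix (Fin n) (Fin n) ℂ) = 0 := by rw [hu, ← hC]
  calc X = X * ↑u * ↑u⁻¹ := by rw [mul_assoc, u.mul_inv, mul_one]
    _ = 0 := by rw [h0, zero_mul]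

lemma sylvesterEnd_apply (A X : Matrix (Fin n) (Fin n) ℂ) :
    sylvesterEnd A X = A * X + X * Aᵀ := rfl

end Aux

/-- The spectrum of the Sylvester operator `X ↦ AX + XAᵀ` on complex `n × n`
matrices equals the set of all sums `λ + μ` of elements of the spectrum of `A`. -/
theorem spectrum_sylvesterEnd (n : ℕ) (A : Matrix (Fin n) (Fin n) ℂ) :
    spectrum ℂ (sylvesterEnd A) =
      {z : ℂ | ∃ l ∈ spectrum ℂ A, ∃ m ∈ spectrum ℂ A, z = l + m} := by
  ext z
  simp only [Set.mem_setOf_eq]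
  constructor
  · intro hz
    obtain ⟨X, hX⟩ :=
      (Module.End.hasEigenvalue_iff_mem_spectrum.mpr hz).exists_hasEigenvector
    have hXne : X ≠ 0 := hX.2
    have heq : A * X + X * Aᵀ = z • X := hX.apply_eq_smul
    have h : A * X = X * (z • 1 - Aᵀ) := by
      rw [mul_sub, mul_smul_comm, mul_one, eq_sub_iff_add_eq, add_comm _ (X * Aᵀ),
        ← heq]
      abel
    obtain ⟨l, hlA, hlB⟩ := key_lemma A (z • 1 - Aᵀ) X hXne h
    have h1 : z • (1 : Matrix (Fin n) (Fin n) ℂ) - Aᵀ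
        = algebraMap ℂ (Matrix (Fin n) (Fin n) ℂ) z - Aᵀ := by
      rw [Algebra.algebraMap_eq_smul_one]
    rw [h1, ← spectrum.singleton_sub_eq] at hlB
    obtain ⟨zz, hzz, m, hm, hlm⟩ := Set.mem_sub.mp hlB
    rw [Set.mem_singleton_iff] at hzz
    subst hzz
    rw [spectrum_transpose] at hm
    exact ⟨l, hlA, m, hm, by rw [← hlm]; ring⟩
  · rintro ⟨l, hl, m, hm, rfl⟩
    have hl' : l ∈ spectrum ℂ (Matrix.toLinAlgEquiv' A) :=
      (AlgEquiv.spectrum_eq (Matrix.toLinAlgEquiv' (R := ℂ) (n := Fin n)) A).symm ▸ hl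
    have hm' : m ∈ spectrum ℂ (Matrix.toLinAlgEquiv' A) :=
      (AlgEquiv.spectrum_eq (Matrix.toLinAlgEquiv' (R := ℂ) (n := Fin n)) A).symm ▸ hm
    obtain ⟨v, hv⟩ :=
      (Module.End.hasEigenvalue_iff_mem_spectrum.mpr hl').exists_hasEigenvector
    obtain ⟨w, hw⟩ :=
      (Module.End.hasEigenvalue_iff_mem_spectrum.mpr hm').exists_hasEigenvector
    have hAv : A *ᵥ v = l • v := hv.apply_eq_smul
    have hAw : A *ᵥ w = m • w := hw.apply_eq_smul
    obtain ⟨i, hi⟩ : ∃ i, v i ≠ 0 := by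
      by_contra hc; push_neg at hc; exact hv.2 (funext hc)
    obtain ⟨j, hj⟩ : ∃ j, w j ≠ 0 := by
      by_contra hc; push_neg at hc; exact hw.2 (funext hc)
    have hXne : vecMulVec v w ≠ 0 := by
      intro h0
      have := congrFun (congrFun h0 i) j
      simp only [vecMulVec_apply, Matrix.zero_apply] at this
      exact (mul_ne_zero hi hj) this
    have h1 : A * vecMulVec v w = vecMulVec (A *ᵥ v) w := by
      ext a b
      simp only [Matrix.mul_apply, vecMulVec_apply, mulVec, dotProduct,
        Finset.sum_mul]
      exact Finset.sum_congr rfl fun k _ => by ring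
    have h2 : vecMulVec v w * Aᵀ = vecMulVec v (A *ᵥ w) := by
      ext a b
      simp only [Matrix.mul_apply, vecMulVec_apply, mulVec, dotProduct,
        transpose_apply, Finset.mul_sum]
      exact Finset.sum_congr rfl fun k _ => by ring
    have hkey : sylvesterEnd A (vecMulVec v w) = (l + m) • vecMulVec v w := by
      rw [sylvesterEnd_apply, h1, h2, hAv, hAw]
      ext a b
      simp only [Matrix.add_apply, vecMulVec_apply, Matrix.smul_apply,
        Pi.smul_apply, smul_eq_mul]
      ring
    exact (Module.End.hasEigenvalue_of_hasEigenvector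
      ⟨Module.End.mem_eigenspace_iff.mpr hkey, hXne⟩).mem_spectrum
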